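/- Let K ≥ 1, ε > 0 and δ ∈ (0,1). For each arm j ∈ Fin K, let X_{j,1},…,X_{j,n} be independent {0,1}-valued (Bernoulli) random variables with mean μ j, all random variables across arms mutually independent, and let μ̂ j = (1/n) · Σᵢ X_{j,i}. If the number of pulls per arm satisfies n ≥ (2/ε²)·ln(2K/δ), then with probability at least 1 − δ any arm a maximizing μ̂ is ε-optimal, i.e. (max over j of μ j) − μ a ≤ ε. -/

import Mathlib

open MeasureTheory ProbabilityTheory Real


lemma bernoulli_mgf_le (p : ℝ) (hp0 : 0 ≤ p) (hp1 : p ≤ 1) (t : ℝ) :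
    1 - p + p * Real.exp t ≤ Real.exp (p * t + t ^ 2 / 8) := by
  set D : ℝ → ℝ := fun t => 1 - p + p * Real.exp t with hDdef
  have hD : ∀ t, 0 < D t := by
    intro t
    rcases hp0.eq_or_lt with h | h
    · simp [hDdef, ← h]
    · have := mul_pos h (Real.exp_pos t)
      simp only [hDdef]; linarith
  have hDder : ∀ t, HasDerivAt D (p * Real.exp t) t := fun t =>
    (((Real.hasDerivAt_exp t).const_mul p).const_add (1 - p))
  set f : ℝ → ℝ := fun t => p * t + t ^ 2 / 8 - Real.log (D t) with hfdef
  set g : ℝ → ℝ := fun t => p + t / 4 - p * Real.exp t / D t with hgdef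
  have hf : ∀ t, HasDerivAt f (g t) t := by
    intro t
    have h1 : HasDerivAt (fun t : ℝ => p * t) p t := (hasDerivAt_id t).const_mul p |>.congr_deriv (by ring)
    have h2 : HasDerivAt (fun t : ℝ => t ^ 2 / 8) (t / 4) t := by
      have := (hasDerivAt_pow 2 t).div_const 8
      exact this.congr_deriv (by rw [show (2:ℕ) - 1 = 1 from rfl]; push_cast; ring)
    have h3 : HasDerivAt (fun t => Real.log (D t)) (p * Real.exp t / D t) t :=
      (hDder t).log (hD t).ne'
    exact ((h1.add h2).sub h3)
  have hg : ∀ t, HasDerivAt g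
      (1 / 4 - (p * Real.exp t / D t) * (1 - p * Real.exp t / D t)) t := by
    intro t
    have h1 : HasDerivAt (fun t : ℝ => p + t / 4) (1 / 4) t := by
      have := ((hasDerivAt_id t).div_const 4).const_add p
      simpa using this
    have h2 : HasDerivAt (fun t => p * Real.exp t / D t)
        ((p * Real.exp t * D t - p * Real.exp t * (p * Real.exp t)) / (D t) ^ 2) t :=
      (((Real.hasDerivAt_exp t).const_mul p)).div (hDder t) (hD t).ne'
    have h0 : D t ≠ 0 := (hD t).ne'
    have heq : (p * Real.exp t / D t) * (1 - p * Real.exp t / D t)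
        = (p * Real.exp t * D t - p * Real.exp t * (p * Real.exp t)) / (D t) ^ 2 := by
      field_simp
    have := h1.sub h2
    rw [heq]
    exact this
  have hu : ∀ t, 0 ≤ p * Real.exp t / D t ∧ p * Real.exp t / D t ≤ 1 := by
    intro t
    constructor
    · exact div_nonneg (mul_nonneg hp0 (Real.exp_pos t).le) (hD t).le
    · rw [div_le_one (hD t)]; simp only [hDdef]; linarith
  have hg_nonneg : ∀ t, 0 ≤ 1 / 4 - (p * Real.exp t / D t) * (1 - p * Real.exp t / D t) := by
    intro t
    obtain ⟨h0, h1⟩ := hu t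
    nlinarith [sq_nonneg (p * Real.exp t / D t - 1 / 2)]
  have hgmono : Monotone g :=
    monotone_of_deriv_nonneg (fun t => (hg t).differentiableAt)
      (fun t => by rw [(hg t).deriv]; exact hg_nonneg t)
  have hg0 : g 0 = 0 := by
    simp only [hgdef, hDdef, Real.exp_zero, mul_one]
    have : 1 - p + p = 1 := by ring
    rw [this]
    ring
  have hf0 : f 0 = 0 := by
    simp only [hfdef, hDdef, Real.exp_zero, mul_one, mul_zero]
    norm_num
  have hfdiff : ∀ x : ℝ, DifferentiableAt ℝ f x := fun x => (hf x).differentiableAt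
  have hfderiv : ∀ x : ℝ, deriv f x = g x := fun x => (hf x).deriv
  have hfnonneg : ∀ t, 0 ≤ f t := by
    intro t
    rcases le_total 0 t with h | h
    · have hmono : MonotoneOn f (Set.Ici (0 : ℝ)) := by
        apply monotoneOn_of_deriv_nonneg (convex_Ici 0)
          (fun x _ => (hfdiff x).continuousAt.continuousWithinAt)
          (fun x _ => (hfdiff x).differentiableWithinAt)
        intro x hx
        rw [hfderiv x, ← hg0]
        exact hgmono (le_of_lt (by simpa using hx))
      have := hmono (Set.self_mem_Ici) (by exact h) h
      linarith [hf0]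
    · have hanti : AntitoneOn f (Set.Iic (0 : ℝ)) := by
        apply antitoneOn_of_deriv_nonpos (convex_Iic 0)
          (fun x _ => (hfdiff x).continuousAt.continuousWithinAt)
          (fun x _ => (hfdiff x).differentiableWithinAt)
        intro x hx
        rw [hfderiv x, ← hg0]
        exact hgmono (le_of_lt (by simpa using hx))
      have := hanti (by exact h) Set.self_mem_Iic h
      linarith [hf0]
  have := hfnonneg t
  have hlog : Real.log (D t) ≤ p * t + t ^ 2 / 8 := by
    simp only [hfdef] at this; linarith
  calc D t ≤ Real.exp (Real.log (D t)) := by rw [Real.exp_log (hD t)]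
    _ ≤ _ := Real.exp_le_exp.2 hlog


lemma iIndepFun_sub {Ω : Type*} [MeasureSpace Ω] {K n : ℕ}
    (X : Fin K → Fin n → Ω → ℝ)
    (h : iIndepFun (fun p : Fin K × Fin n => X p.1 p.2) ℙ)
    (j : Fin K) : iIndepFun (X j) ℙ := by
  rw [iIndepFun_iff_measure_inter_preimage_eq_mul] at h ⊢
  intro S sets hsets
  classical
  have hinj : Function.Injective (fun i : Fin n => ((j, i) : Fin K × Fin n)) :=
    fun a b hab => by simpa using hab
  set sets' : Fin K × Fin n → Set ℝ := fun p => if p.1 = j then sets p.2 else Set.univ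
    with hs'
  have key := h (S.image (fun i => (j, i))) (sets := sets') ?_
  · rw [Finset.prod_image (fun a _ b _ hab => hinj hab)] at key
    have h1 : (⋂ p ∈ S.image (fun i : Fin n => ((j, i) : Fin K × Fin n)),
        (fun ω => X p.1 p.2 ω) ⁻¹' sets' p) = ⋂ i ∈ S, X j i ⁻¹' sets i := by
      ext ω
      simp only [Set.mem_iInter, Finset.mem_image, forall_exists_index, and_imp]
      constructor
      · intro hω i hi
        have := hω (j, i) i hi rfl
        simpa [hs'] using this
      · rintro hω p i hi rfl
        simpa [hs'] using hω i hi
    rw [h1] at key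
    rw [key]
    refine Finset.prod_congr rfl fun i hi => ?_
    simp [hs']
  · intro p hp
    by_cases hpj : p.1 = j
    · rcases Finset.mem_image.1 hp with ⟨i, hi, rfl⟩
      simpa [hs'] using hsets i hi
    · simp [hs', hpj]


lemma chernoff_bernoulli {Ω : Type*} [MeasureSpace Ω] [IsProbabilityMeasure (ℙ : Measure Ω)]
    {n : ℕ} (Y : Fin n → Ω → ℝ) (p s : ℝ)
    (hmeas : ∀ i, Measurable (Y i))
    (hindep : iIndepFun Y ℙ)
    (hval : ∀ i ω, Y i ω = 0 ∨ Y i ω = 1)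
    (hmean : ∀ i, ∫ ω, Y i ω ∂ℙ = p)
    (hp0 : 0 ≤ p) (hp1 : p ≤ 1) (hs : 0 ≤ s) :
    (ℙ {ω | (n : ℝ) * (p + s) ≤ ∑ i, Y i ω}).toReal ≤ Real.exp (-2 * n * s ^ 2) := by
  set t : ℝ := 4 * s with htdef
  have ht : 0 ≤ t := by positivity
  have hint : ∀ i, Integrable (fun ω => Real.exp (t * Y i ω)) ℙ := by
    intro i
    refine ⟨((hmeas i).const_mul t).exp.aestronglyMeasurable, ?_⟩
    apply HasFiniteIntegral.of_bounded (C := Real.exp t + 1)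
    filter_upwards with ω
    rw [Real.norm_eq_abs, abs_of_pos (Real.exp_pos _)]
    have hle : t * Y i ω ≤ t := by rcases hval i ω with h | h <;> simp [h, ht]
    linarith [Real.exp_le_exp.2 hle]
  have hintY : ∀ i, Integrable (Y i) ℙ := by
    intro i
    refine ⟨(hmeas i).aestronglyMeasurable, ?_⟩
    apply HasFiniteIntegral.of_bounded (C := 1)
    filter_upwards with ω
    rcases hval i ω with h | h <;> simp [h]
  have hmgf : ∀ i, mgf (Y i) ℙ t = 1 - p + p * Real.exp t := by
    intro i
    have hpt : (fun ω => Real.exp (t * Y i ω))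
        = fun ω => (1 - Y i ω) + Y i ω * Real.exp t := by
      funext ω; rcases hval i ω with h | h <;> simp [h]
    have : mgf (Y i) ℙ t = ∫ ω, ((1 - Y i ω) + Y i ω * Real.exp t) ∂ℙ := by
      rw [mgf, ← hpt]
    have hA : Integrable (fun ω => 1 - Y i ω) ℙ := (integrable_const 1).sub (hintY i)
    have hB : Integrable (fun ω => Y i ω * Real.exp t) ℙ := (hintY i).mul_const _
    rw [this, integral_add hA hB,
      integral_sub (integrable_const 1) (hintY i), integral_const, integral_mul_const,
      hmean i]
    simp
  have hintS : Integrable (fun ω => Real.exp (t * (∑ i, Y i) ω)) ℙ :=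
    hindep.integrable_exp_mul_sum hmeas (fun i _ => hint i)
  have hsum := hindep.mgf_sum hmeas Finset.univ (t := t)
  have hsetEq : {ω | (n : ℝ) * (p + s) ≤ ∑ i, Y i ω}
      = {ω | (n : ℝ) * (p + s) ≤ (∑ i, Y i) ω} := by
    ext ω; simp [Finset.sum_apply]
  rw [hsetEq]
  calc (ℙ {ω | (n : ℝ) * (p + s) ≤ (∑ i, Y i) ω}).toReal
      ≤ Real.exp (-t * ((n : ℝ) * (p + s))) * mgf (∑ i, Y i) ℙ t :=
        measure_ge_le_exp_mul_mgf _ ht hintS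
    _ ≤ Real.exp (-t * ((n : ℝ) * (p + s))) * (Real.exp (p * t + t ^ 2 / 8)) ^ n := by
        rw [hsum, Finset.prod_congr rfl (fun i _ => hmgf i), Finset.prod_const,
          Finset.card_univ, Fintype.card_fin]
        have hbase : (0 : ℝ) ≤ 1 - p + p * Real.exp t := by
          nlinarith [Real.exp_pos t, mul_nonneg hp0 (Real.exp_pos t).le]
        exact mul_le_mul_of_nonneg_left
          (pow_le_pow_left₀ hbase (bernoulli_mgf_le p hp0 hp1 t) n) (Real.exp_pos _).le
    _ = Real.exp (-2 * n * s ^ 2) := by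
        rw [← Real.exp_nat_mul, ← Real.exp_add]
        congr 1
        rw [htdef]; ring





/-- `(ε,δ)`-PAC sample complexity for the naive best-arm algorithm:
with `K` arms of mutually independent `{0,1}`-valued rewards with means `μ j`,
each pulled `n ≥ (2/ε²)·ln(2K/δ)` times, with probability at least `1 - δ`
every arm `a` maximizing the empirical means `μ̂ j ω = (1/n) ∑ i, X j i ω` is
ε-optimal: `(max over j of μ j) - μ a ≤ ε`. -/
theorem naive_pac_sample_complexity
    {Ω : Type*} [MeasureSpace Ω] [IsProbabilityMeasure (ℙ : Measure Ω)]
    (K n : ℕ) (hK : 1 ≤ K) (ε δ : ℝ) (hε : 0 < ε) (hδ0 : 0 < δ) (hδ1 : δ < 1)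
    (X : Fin K → Fin n → Ω → ℝ) (μ : Fin K → ℝ)
    (hmeas : ∀ j i, Measurable (X j i))
    (hindep : iIndepFun
      (fun p : Fin K × Fin n => X p.1 p.2) ℙ)
    (hval : ∀ j i ω, X j i ω = 0 ∨ X j i ω = 1)
    (hmean : ∀ j i, ∫ ω, X j i ω ∂ℙ = μ j)
    (hn : (2 / ε ^ 2) * Real.log (2 * (K : ℝ) / δ) ≤ (n : ℝ)) :
    ENNReal.ofReal (1 - δ) ≤
      ℙ {ω | ∀ a : Fin K,
        (∀ j : Fin K,
          (1 / (n : ℝ)) * ∑ i, X j i ω ≤ (1 / (n : ℝ)) * ∑ i, X a i ω) →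
        Finset.univ.sup' ⟨⟨0, hK⟩, Finset.mem_univ _⟩ μ - μ a ≤ ε} := by
  classical
  have hK0 : (0 : ℝ) < K := by exact_mod_cast hK
  have hlogpos : 0 < Real.log (2 * (K : ℝ) / δ) := by
    apply Real.log_pos
    rw [lt_div_iff₀ hδ0]
    have hK1 : (1 : ℝ) ≤ K := by exact_mod_cast hK
    nlinarith
  have hnpos : 0 < n := by
    rcases Nat.eq_zero_or_pos n with h | h
    · exfalso
      rw [h] at hn
      push_cast at hn
      have h2 : 0 < (2 / ε ^ 2) * Real.log (2 * (K : ℝ) / δ) :=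
        mul_pos (by positivity) hlogpos
      linarith
    · exact h
  have hnR : (0 : ℝ) < n := by exact_mod_cast hnpos
  have hε2 : (0 : ℝ) < ε ^ 2 := by positivity
  -- key numeric bound
  have hkey : Real.exp (-2 * (n : ℝ) * (ε / 2) ^ 2) ≤ δ / (2 * K) := by
    have h1 : Real.log (2 * (K : ℝ) / δ) ≤ (n : ℝ) * ε ^ 2 / 2 := by
      rw [div_mul_eq_mul_div, div_le_iff₀ hε2] at hn
      linarith
    have h2 : 2 * (K : ℝ) / δ ≤ Real.exp ((n : ℝ) * ε ^ 2 / 2) :=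
      (Real.log_le_iff_le_exp (by positivity)).1 h1
    have h3 : -2 * (n : ℝ) * (ε / 2) ^ 2 = -((n : ℝ) * ε ^ 2 / 2) := by ring
    rw [h3, Real.exp_neg]
    have h4 : (Real.exp ((n : ℝ) * ε ^ 2 / 2))⁻¹ ≤ (2 * (K : ℝ) / δ)⁻¹ :=
      inv_anti₀ (by positivity) h2
    calc (Real.exp ((n : ℝ) * ε ^ 2 / 2))⁻¹ ≤ (2 * (K : ℝ) / δ)⁻¹ := h4
      _ = δ / (2 * K) := by rw [inv_div]
  -- integrability of X's
  have hintX : ∀ j i, Integrable (X j i) ℙ := by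
    intro j i
    refine ⟨(hmeas j i).aestronglyMeasurable, ?_⟩
    apply HasFiniteIntegral.of_bounded (C := 1)
    filter_upwards with ω
    rcases hval j i ω with h | h <;> simp [h]
  -- means in [0,1]
  have hμ01 : ∀ j, 0 ≤ μ j ∧ μ j ≤ 1 := by
    intro j
    have i0 : Fin n := ⟨0, hnpos⟩
    constructor
    · rw [← hmean j i0]
      apply integral_nonneg
      intro ω
      rcases hval j i0 ω with h | h <;> simp [h]
    · rw [← hmean j i0]
      calc ∫ ω, X j i0 ω ∂ℙ ≤ ∫ _, (1 : ℝ) ∂ℙ := by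
            apply integral_mono (hintX j i0) (integrable_const 1)
            intro ω
            rcases hval j i0 ω with h | h <;> simp [h]
        _ = 1 := by simp
  -- bad events
  set A : Fin K → Set Ω := fun j => {ω | (n : ℝ) * (μ j + ε / 2) ≤ ∑ i, X j i ω} with hA
  set B : Fin K → Set Ω :=
    fun j => {ω | (n : ℝ) * ((1 - μ j) + ε / 2) ≤ ∑ i, (1 - X j i ω)} with hB
  have hAmeas : ∀ j, MeasurableSet (A j) := fun j =>
    measurableSet_le measurable_const (Finset.measurable_sum _ fun i _ => hmeas j i)
  have hBmeas : ∀ j, MeasurableSet (B j) := fun j =>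
    measurableSet_le measurable_const
      (Finset.measurable_sum _ fun i _ => measurable_const.sub (hmeas j i))
  have hAbound : ∀ j, ℙ (A j) ≤ ENNReal.ofReal (δ / (2 * K)) := by
    intro j
    have hch := chernoff_bernoulli (X j) (μ j) (ε / 2) (hmeas j)
      (iIndepFun_sub X hindep j) (hval j) (hmean j) (hμ01 j).1 (hμ01 j).2
      (by positivity)
    rw [← ENNReal.ofReal_toReal (measure_ne_top ℙ (A j))]
    exact ENNReal.ofReal_le_ofReal (hch.trans hkey)
  have hBbound : ∀ j, ℙ (B j) ≤ ENNReal.ofReal (δ / (2 * K)) := by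
    intro j
    have hind' : iIndepFun
        (fun i => fun ω => 1 - X j i ω) ℙ :=
      (iIndepFun_sub X hindep j).comp (fun _ x => 1 - x)
        (fun _ => measurable_const.sub measurable_id)
    have hch := chernoff_bernoulli (fun i ω => 1 - X j i ω) (1 - μ j) (ε / 2)
      (fun i => measurable_const.sub (hmeas j i)) hind'
      (fun i ω => by rcases hval j i ω with h | h <;> simp [h])
      (fun i => by
        rw [integral_sub (integrable_const 1) (hintX j i), integral_const, hmean j i]
        simp)
      (by linarith [(hμ01 j).2]) (by linarith [(hμ01 j).1]) (by positivity)
    rw [← ENNReal.ofReal_toReal (measure_ne_top ℙ (B j))]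
    exact ENNReal.ofReal_le_ofReal (hch.trans hkey)
  set U : Set Ω := ⋃ j, A j ∪ B j with hU
  have hUmeas : MeasurableSet U :=
    MeasurableSet.iUnion fun j => (hAmeas j).union (hBmeas j)
  -- good event inclusion
  have hGsub : Uᶜ ⊆ {ω | ∀ a : Fin K,
      (∀ j : Fin K,
        (1 / (n : ℝ)) * ∑ i, X j i ω ≤ (1 / (n : ℝ)) * ∑ i, X a i ω) →
      Finset.univ.sup' ⟨⟨0, hK⟩, Finset.mem_univ _⟩ μ - μ a ≤ ε} := by
    intro ω hω
    simp only [hU, Set.mem_compl_iff, Set.mem_iUnion, not_exists, Set.mem_union,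
      not_or, hA, hB, Set.mem_setOf_eq] at hω
    intro a ha
    have hSums : ∀ j, ∑ i, X j i ω ≤ ∑ i, X a i ω := by
      intro j
      have h1n : (0 : ℝ) < 1 / (n : ℝ) := by positivity
      exact le_of_mul_le_mul_left (ha j) h1n
    obtain ⟨j0, -, hj0⟩ := Finset.exists_mem_eq_sup'
      (⟨⟨0, hK⟩, Finset.mem_univ _⟩ : Finset.univ.Nonempty) μ
    rw [hj0]
    have hBj0 : ∑ i, (1 - X j0 i ω) < (n : ℝ) * ((1 - μ j0) + ε / 2) :=
      lt_of_not_ge (hω j0).2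
    have hAa : ∑ i, X a i ω < (n : ℝ) * (μ a + ε / 2) :=
      lt_of_not_ge (hω a).1
    have hsum1 : ∑ i, (1 - X j0 i ω) = (n : ℝ) - ∑ i, X j0 i ω := by
      rw [Finset.sum_sub_distrib, Finset.sum_const, Finset.card_univ, Fintype.card_fin]
      simp [nsmul_eq_mul]
    rw [hsum1] at hBj0
    have hS := hSums j0
    by_contra hcon
    push_neg at hcon
    have hmul : (n : ℝ) * ε < (n : ℝ) * (μ j0 - μ a) :=
      mul_lt_mul_of_pos_left hcon hnR
    nlinarith
  -- union bound
  have hUbound : ℙ U ≤ ENNReal.ofReal δ := by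
    calc ℙ U ≤ ∑' j : Fin K, ℙ (A j ∪ B j) := measure_iUnion_le _
      _ ≤ ∑' (_x : Fin K),
            (ENNReal.ofReal (δ / (2 * K)) + ENNReal.ofReal (δ / (2 * K))) :=
          ENNReal.tsum_le_tsum fun j =>
            (measure_union_le _ _).trans (add_le_add (hAbound j) (hBbound j))
      _ = (K : ENNReal) *
            (ENNReal.ofReal (δ / (2 * K)) + ENNReal.ofReal (δ / (2 * K))) := by
          rw [tsum_fintype]
          simp [Finset.sum_const, Finset.card_univ, mul_comm, mul_add]
      _ ≤ ENNReal.ofReal δ := by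
          rw [← ENNReal.ofReal_add (by positivity) (by positivity)]
          have h5 : δ / (2 * K) + δ / (2 * K) = δ / K := by ring
          rw [h5, ← ENNReal.ofReal_natCast K,
            ← ENNReal.ofReal_mul (by positivity)]
          apply ENNReal.ofReal_le_ofReal
          rw [mul_div_cancel₀]
          exact hK0.ne'
  -- conclude
  calc ENNReal.ofReal (1 - δ) = 1 - ENNReal.ofReal δ := by
        rw [ENNReal.ofReal_sub 1 hδ0.le, ENNReal.ofReal_one]
    _ ≤ 1 - ℙ U := tsub_le_tsub_left hUbound 1
    _ = ℙ Uᶜ := (prob_compl_eq_one_sub hUmeas).symm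
    _ ≤ _ := measure_mono hGsub
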